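/- Let λ > 0 with θ_λ ∈ (0, π/2) defined by tan θ_λ = 1/λ, let m ∈ (0, θ_λ], let μ_D : [0, m] → [0, ∞) be continuous with μ_D(0) > 0, let (ψ, a_c) be a correction pair with ψ(1 − a_c) > 0, let τ : (0, m] → [0, 1) be the map sending φ to the unique a ∈ [0, 1) satisfying E(φ, a), and define μ_G^c(φ) := μ_G(φ) + (cos θ_λ · sin² φ / cos(θ_λ − φ)) · ψ((τ(φ) − a_c)_+)/(1 − τ(φ))² on (0, m]. Then φ · μ_G^c(φ) → μ_D(0) as φ → 0⁺; in particular μ_G^c(φ) → +∞ as φ → 0⁺. -/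

import Mathlib

open Real Set

/-- The function `g(φ) = cot φ · tan(θ − φ) + (μ_D(φ)/sin φ)(1 + cot φ · tan(θ − φ))`. -/
noncomputable def gBEM (θ : ℝ) (μD : ℝ → ℝ) (φ : ℝ) : ℝ :=
  (Real.cos φ / Real.sin φ) * Real.tan (θ - φ) +
    (μD φ / Real.sin φ) * (1 + (Real.cos φ / Real.sin φ) * Real.tan (θ - φ))

/-- The implicit equation `E(φ, a)`:
`a/(1−a) + (sin θ · sin φ / cos(θ−φ)) · ψ((a−a_c)_+)/(1−a)² = g(φ)`. -/
def EBEM (θ : ℝ) (μD ψ : ℝ → ℝ) (ac φ a : ℝ) : Prop :=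
  a / (1 - a) +
      (Real.sin θ * Real.sin φ / Real.cos (θ - φ)) * ψ (max (a - ac) 0) / (1 - a) ^ 2
    = gBEM θ μD φ


/-- The corrected macroscopic function
`μ_G^c(φ) = μ_G(φ) + (cos θ · sin²φ / cos(θ−φ)) · ψ((τ(φ)−a_c)_+)/(1−τ(φ))²`. -/
noncomputable def muGc (θ : ℝ) (ψ : ℝ → ℝ) (ac : ℝ) (τ : ℝ → ℝ) (φ : ℝ) : ℝ :=
  Real.sin φ * Real.tan (θ - φ) +
    (Real.cos θ * Real.sin φ ^ 2 / Real.cos (θ - φ)) * ψ (max (τ φ - ac) 0) / (1 - τ φ) ^ 2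

set_option maxHeartbeats 1000000 in
/-- If `μ_D(0) > 0` and `ψ(1 − a_c) > 0`, then `φ · μ_G^c(φ) → μ_D(0)` as
`φ → 0⁺`; in particular `μ_G^c(φ) → +∞` as `φ → 0⁺`. -/
theorem bem_muGc_blowup
    (lam θ m : ℝ) (hlam : 0 < lam) (hθ : θ ∈ Ioo 0 (π / 2))
    (htan : Real.tan θ = 1 / lam) (hm : m ∈ Ioc 0 θ)
    (μD : ℝ → ℝ) (hμDc : ContinuousOn μD (Icc 0 m))
    (hμDnn : ∀ φ ∈ Icc 0 m, 0 ≤ μD φ) (hμD0 : 0 < μD 0)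
    (ac : ℝ) (hac : ac ∈ Ioo (0 : ℝ) 1)
    (ψ : ℝ → ℝ) (hψc : ContinuousOn ψ (Ici 0)) (hψmono : MonotoneOn ψ (Ici 0))
    (hψ0 : ψ 0 = 0) (hψnn : ∀ x ∈ Ici (0 : ℝ), 0 ≤ ψ x)
    (hψac : 0 < ψ (1 - ac))
    (τ : ℝ → ℝ)
    (hτ : ∀ φ ∈ Ioc 0 m, τ φ ∈ Ico (0 : ℝ) 1 ∧ EBEM θ μD ψ ac φ (τ φ))
    (hτuniq : ∀ φ ∈ Ioc 0 m, ∀ a ∈ Ico (0 : ℝ) 1, EBEM θ μD ψ ac φ a → a = τ φ) :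
    Filter.Tendsto (fun φ : ℝ => φ * muGc θ ψ ac τ φ)
      (nhdsWithin 0 (Ioi 0)) (nhds (μD 0)) ∧
    Filter.Tendsto (muGc θ ψ ac τ) (nhdsWithin 0 (Ioi 0)) Filter.atTop := by
  obtain ⟨hθ0, hθ2⟩ := hθ
  obtain ⟨hm0, hmθ⟩ := hm
  obtain ⟨hac0, hac1⟩ := hac
  have hπ := Real.pi_pos
  have hcosθ : 0 < Real.cos θ := Real.cos_pos_of_mem_Ioo ⟨by linarith, hθ2⟩
  have hsinθ : 0 < Real.sin θ := Real.sin_pos_of_pos_of_lt_pi hθ0 (by linarith)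
  have htanθ : 0 < Real.tan θ := by rw [Real.tan_eq_sin_div_cos]; positivity
  set F := nhdsWithin (0:ℝ) (Ioi 0) with hF
  have hmem : Ioc (0:ℝ) m ∈ F := Ioc_mem_nhdsGT_of_mem ⟨le_refl 0, hm0⟩
  -- pointwise facts on (0, m]
  have hsinφ : ∀ φ ∈ Ioc (0:ℝ) m, 0 < Real.sin φ := fun φ hφ =>
    Real.sin_pos_of_pos_of_lt_pi hφ.1 (by linarith [hφ.2])
  have hcosΔpos : ∀ φ ∈ Ioc (0:ℝ) m, 0 < Real.cos (θ - φ) :=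
    fun φ hφ => Real.cos_pos_of_mem_Ioo ⟨by linarith [hφ.1, hφ.2], by linarith [hφ.1, hφ.2]⟩
  have hcosΔge : ∀ φ ∈ Ioc (0:ℝ) m, Real.cos θ ≤ Real.cos (θ - φ) := fun φ hφ =>
    Real.cos_le_cos_of_nonneg_of_le_pi (by linarith [hφ.2]) (by linarith) (by linarith [hφ.1])
  have hτ0 : ∀ φ ∈ Ioc (0:ℝ) m, 0 ≤ τ φ := fun φ hφ => (hτ φ hφ).1.1
  have hτlt1 : ∀ φ ∈ Ioc (0:ℝ) m, τ φ < 1 := fun φ hφ => (hτ φ hφ).1.2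
  have hEq : ∀ φ ∈ Ioc (0:ℝ) m,
      τ φ / (1 - τ φ) + (Real.sin θ * Real.sin φ / Real.cos (θ - φ))
        * ψ (max (τ φ - ac) 0) / (1 - τ φ) ^ 2 = gBEM θ μD φ := fun φ hφ => (hτ φ hφ).2
  have hψτ_nn : ∀ φ, 0 ≤ ψ (max (τ φ - ac) 0) := fun φ => hψnn _ (mem_Ici.mpr (le_max_right _ _))
  have hψτ_le : ∀ φ ∈ Ioc (0:ℝ) m, ψ (max (τ φ - ac) 0) ≤ ψ (1 - ac) := fun φ hφ =>
    hψmono (mem_Ici.mpr (le_max_right _ _)) (mem_Ici.mpr (by linarith))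
      (max_le (by linarith [hτlt1 φ hφ]) (by linarith))
  have hterm2_nn : ∀ φ ∈ Ioc (0:ℝ) m,
      0 ≤ (Real.sin θ * Real.sin φ / Real.cos (θ - φ)) * ψ (max (τ φ - ac) 0) / (1 - τ φ) ^ 2 :=
    fun φ hφ => div_nonneg (mul_nonneg (div_nonneg (mul_nonneg hsinθ.le (hsinφ φ hφ).le)
      (hcosΔpos φ hφ).le) (hψτ_nn φ)) (sq_nonneg _)
  have htdiv_nn : ∀ φ ∈ Ioc (0:ℝ) m, 0 ≤ τ φ / (1 - τ φ) :=
    fun φ hφ => div_nonneg (hτ0 φ hφ) (by linarith [hτlt1 φ hφ])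
  have hg_ge1 : ∀ φ ∈ Ioc (0:ℝ) m, τ φ / (1 - τ φ) ≤ gBEM θ μD φ :=
    fun φ hφ => by linarith [hEq φ hφ, hterm2_nn φ hφ]
  have hg_ge2 : ∀ φ ∈ Ioc (0:ℝ) m,
      (Real.sin θ * Real.sin φ / Real.cos (θ - φ)) * ψ (max (τ φ - ac) 0) / (1 - τ φ) ^ 2
        ≤ gBEM θ μD φ := fun φ hφ => by linarith [hEq φ hφ, htdiv_nn φ hφ]
  have hg_nn : ∀ φ ∈ Ioc (0:ℝ) m, 0 ≤ gBEM θ μD φ :=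
    fun φ hφ => le_trans (htdiv_nn φ hφ) (hg_ge1 φ hφ)
  -- basic limits
  have hid : Filter.Tendsto (fun φ : ℝ => φ) F (nhds 0) :=
    Filter.tendsto_id.mono_left nhdsWithin_le_nhds
  have hsin0 : Filter.Tendsto (fun φ : ℝ => Real.sin φ) F (nhds 0) := by
    simpa [Function.comp_def] using (Real.continuous_sin.tendsto 0).comp hid
  have hcos1 : Filter.Tendsto (fun φ : ℝ => Real.cos φ) F (nhds 1) := by
    simpa [Function.comp_def] using (Real.continuous_cos.tendsto 0).comp hid
  have hT : Filter.Tendsto (fun φ : ℝ => Real.tan (θ - φ)) F (nhds (Real.tan θ)) := by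
    have h1 : Filter.Tendsto (fun φ : ℝ => θ - φ) F (nhds θ) := by
      simpa using (tendsto_const_nhds.sub hid)
    exact ((Real.continuousAt_tan.mpr hcosθ.ne').tendsto).comp h1
  have hμDlim : Filter.Tendsto μD F (nhds (μD 0)) := by
    have h1 : Filter.Tendsto μD (nhdsWithin 0 (Icc 0 m)) (nhds (μD 0)) :=
      (hμDc 0 ⟨le_refl 0, hm0.le⟩).tendsto
    have h2 : F ≤ nhdsWithin 0 (Icc 0 m) := by
      rw [hF, ← nhdsWithin_Ioc_eq_nhdsGT hm0]
      exact nhdsWithin_mono _ Ioc_subset_Icc_self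
    exact h1.mono_left h2
  have hsdiv : Filter.Tendsto (fun φ : ℝ => Real.sin φ / φ) F (nhds 1) := by
    have h := hasDerivAt_iff_tendsto_slope.mp (Real.hasDerivAt_sin 0)
    rw [Real.cos_zero] at h
    have h2 : Filter.Tendsto (slope Real.sin 0) F (nhds 1) :=
      h.mono_left (nhdsWithin_mono _ (fun x hx => ne_of_gt hx))
    refine h2.congr fun x => ?_
    simp [slope_def_field, div_eq_iff]
  have hφdivsin : Filter.Tendsto (fun φ : ℝ => φ / Real.sin φ) F (nhds 1) := by
    have := hsdiv.inv₀ one_ne_zero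
    simpa [inv_div] using this
  -- the limit of φ sin φ g(φ)
  have hL1 : Filter.Tendsto (fun φ => φ * Real.sin φ * gBEM θ μD φ) F
      (nhds (μD 0 * Real.tan θ)) := by
    have heq : ∀ᶠ φ in F, φ * Real.cos φ * Real.tan (θ - φ) + φ * μD φ
        + (φ / Real.sin φ) * (μD φ * Real.cos φ * Real.tan (θ - φ))
        = φ * Real.sin φ * gBEM θ μD φ := by
      filter_upwards [hmem] with φ hφ
      have hs := (hsinφ φ hφ).ne'
      rw [gBEM]
      field_simp
      ring
    have hlim : Filter.Tendsto (fun φ => φ * Real.cos φ * Real.tan (θ - φ) + φ * μD φ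
        + (φ / Real.sin φ) * (μD φ * Real.cos φ * Real.tan (θ - φ))) F
        (nhds (0 * 1 * Real.tan θ + 0 * μD 0 + 1 * (μD 0 * 1 * Real.tan θ))) :=
      (((hid.mul hcos1).mul hT).add (hid.mul hμDlim)).add
        (hφdivsin.mul ((hμDlim.mul hcos1).mul hT))
    have := hlim.congr' heq
    simpa using this
  have hφ2g : Filter.Tendsto (fun φ => φ ^ 2 * gBEM θ μD φ) F (nhds (μD 0 * Real.tan θ)) := by
    have heq : ∀ᶠ φ in F, (φ / Real.sin φ) * (φ * Real.sin φ * gBEM θ μD φ)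
        = φ ^ 2 * gBEM θ μD φ := by
      filter_upwards [hmem] with φ hφ
      have hs := (hsinφ φ hφ).ne'
      field_simp
    have := (hφdivsin.mul hL1).congr' heq
    simpa using this
  have hLpos : 0 < μD 0 * Real.tan θ := mul_pos hμD0 htanθ
  -- τ(φ) → 1
  have hτto1 : ∀ b, ac ≤ b → b < 1 → ∀ᶠ φ in F, b < τ φ := by
    intro b hb1 hb2
    have h1b : (0:ℝ) < 1 - b := by linarith
    have hBpos : 0 < b / (1 - b) + 1 := by
      have : 0 ≤ b / (1 - b) := div_nonneg (by linarith) h1b.le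
      linarith
    have hK2pos : 0 < μD 0 * Real.tan θ / (2 * (b / (1 - b) + 1)) :=
      div_pos hLpos (by linarith)
    have ev1 : ∀ᶠ φ in F, μD 0 * Real.tan θ / 2 < φ ^ 2 * gBEM θ μD φ :=
      hφ2g.eventually (eventually_gt_nhds (by linarith))
    have ev2 : ∀ᶠ φ in F, φ * (ψ (1 - ac) / (Real.cos θ * (1 - b) ^ 2)) ≤ 1 := by
      have h0 : Filter.Tendsto (fun φ : ℝ => φ * (ψ (1 - ac) / (Real.cos θ * (1 - b) ^ 2))) F
          (nhds 0) := by
        simpa using hid.mul (tendsto_const_nhds (x := ψ (1 - ac) / (Real.cos θ * (1 - b) ^ 2)))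
      exact h0.eventually (eventually_le_nhds (by norm_num))
    have ev3 : ∀ᶠ φ in F, φ ^ 2 < μD 0 * Real.tan θ / (2 * (b / (1 - b) + 1)) := by
      have h0 : Filter.Tendsto (fun φ : ℝ => φ ^ 2) F (nhds 0) := by
        have := hid.mul hid
        simpa [sq] using this
      exact h0.eventually (eventually_lt_nhds hK2pos)
    filter_upwards [hmem, ev1, ev2, ev3] with φ hφ h1 h2 h3
    by_contra hcon
    push_neg at hcon
    have ht1 := hτlt1 φ hφ
    have ht0 := hτ0 φ hφ
    have hsφ := hsinφ φ hφ
    have hcΔ := hcosΔpos φ hφ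
    have hcΔ2 := hcosΔge φ hφ
    have h1t : (0:ℝ) < 1 - τ φ := by linarith
    have hnum : Real.sin θ * Real.sin φ ≤ φ := by
      nlinarith [Real.sin_le_one θ, Real.sin_lt hφ.1, hsinθ]
    have hcle : Real.sin θ * Real.sin φ / Real.cos (θ - φ) ≤ φ / Real.cos θ :=
      div_le_div₀ hφ.1.le hnum hcosθ hcΔ2
    have hψle := hψτ_le φ hφ
    have hE := hEq φ hφ
    have htdiv : τ φ / (1 - τ φ) ≤ b / (1 - b) := by
      rw [div_le_div_iff₀ h1t h1b]
      linarith
    have hsq : (1 - b) ^ 2 ≤ (1 - τ φ) ^ 2 := by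
      nlinarith [mul_nonneg (sub_nonneg.2 hcon) (by linarith : (0:ℝ) ≤ 2 - τ φ - b)]
    have hterm : (Real.sin θ * Real.sin φ / Real.cos (θ - φ)) * ψ (max (τ φ - ac) 0)
        / (1 - τ φ) ^ 2 ≤ (φ / Real.cos θ) * ψ (1 - ac) / (1 - b) ^ 2 := by
      apply div_le_div₀
        (mul_nonneg (div_nonneg hφ.1.le hcosθ.le) (hψnn _ (mem_Ici.mpr (by linarith))))
        (mul_le_mul hcle hψle (hψτ_nn φ) (div_nonneg hφ.1.le hcosθ.le))
        (by positivity) hsq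
    have hterm2 : (φ / Real.cos θ) * ψ (1 - ac) / (1 - b) ^ 2
        = φ * (ψ (1 - ac) / (Real.cos θ * (1 - b) ^ 2)) := by
      field_simp
    have hgle : gBEM θ μD φ ≤ b / (1 - b) + 1 := by
      rw [← hE]
      rw [hterm2] at hterm
      linarith
    have hc1 := mul_le_mul_of_nonneg_left hgle (sq_nonneg φ)
    have hc2 := mul_lt_mul_of_pos_right h3 hBpos
    have hc3 : μD 0 * Real.tan θ / (2 * (b / (1 - b) + 1)) * (b / (1 - b) + 1)
        = μD 0 * Real.tan θ / 2 := by
      field_simp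
    linarith
  -- choice of δ and b
  have hpac : (0:ℝ) < 1 - ac := by linarith
  have hψcA : ContinuousAt ψ (1 - ac) := hψc.continuousAt (Ici_mem_nhds hpac)
  have hev : ∀ᶠ x in nhds (1 - ac), ψ (1 - ac) / 2 < ψ x :=
    hψcA.tendsto.eventually (eventually_gt_nhds (by linarith))
  obtain ⟨δ, hδ0, hδ⟩ := Metric.eventually_nhds_iff.mp hev
  have hb1 : max ac (1 - δ / 2) < 1 := max_lt hac1 (by linarith)
  have hbac : ac ≤ max ac (1 - δ / 2) := le_max_left _ _
  have hτb := hτto1 _ hbac hb1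
  have hψτ_lb : ∀ φ ∈ Ioc (0:ℝ) m, max ac (1 - δ / 2) < τ φ →
      ψ (1 - ac) / 2 < ψ (max (τ φ - ac) 0) := by
    intro φ hφ hbτ
    have ht1 := hτlt1 φ hφ
    have hx : max (τ φ - ac) 0 = τ φ - ac := max_eq_left (by
      have := le_trans hbac hbτ.le; linarith)
    rw [hx]
    apply hδ
    rw [Real.dist_eq, abs_lt]
    have h2 : 1 - δ / 2 ≤ max ac (1 - δ / 2) := le_max_right _ _
    constructor
    · linarith
    · linarith
  -- the key squeeze: φ sin φ τ/(1-τ) → 0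
  have ev_sin : ∀ᶠ φ in F, φ / 2 ≤ Real.sin φ := by
    have h0 := hsdiv.eventually (eventually_gt_nhds (show (1:ℝ)/2 < 1 by norm_num))
    filter_upwards [h0, self_mem_nhdsWithin] with φ h1 h2
    rw [mem_Ioi] at h2
    rw [lt_div_iff₀ h2] at h1
    linarith
  have ev_g : ∀ᶠ φ in F, φ ^ 2 * gBEM θ μD φ ≤ μD 0 * Real.tan θ + 1 :=
    hφ2g.eventually (eventually_le_nhds (by linarith))
  have hε0 : 0 < ψ (1 - ac) / 2 := by linarith
  have hCpos : 0 < 2 * (μD 0 * Real.tan θ + 1) / (Real.sin θ * (ψ (1 - ac) / 2)) :=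
    div_pos (by linarith) (mul_pos hsinθ hε0)
  have hh0 : Filter.Tendsto (fun φ => φ * Real.sin φ * (τ φ / (1 - τ φ))) F (nhds 0) := by
    have hsqrtlim : Filter.Tendsto
        (fun φ : ℝ => Real.sqrt (2 * (μD 0 * Real.tan θ + 1) / (Real.sin θ * (ψ (1 - ac) / 2)) * φ))
        F (nhds 0) := by
      have h1 : Filter.Tendsto
          (fun φ : ℝ => 2 * (μD 0 * Real.tan θ + 1) / (Real.sin θ * (ψ (1 - ac) / 2)) * φ) F
          (nhds 0) := by
        simpa using (tendsto_const_nhds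
          (x := 2 * (μD 0 * Real.tan θ + 1) / (Real.sin θ * (ψ (1 - ac) / 2)))).mul hid
      have := (Real.continuous_sqrt.tendsto 0).comp h1
      simpa [Function.comp_def] using this
    refine squeeze_zero' ?_ ?_ hsqrtlim
    · filter_upwards [hmem] with φ hφ
      exact mul_nonneg (mul_nonneg hφ.1.le (hsinφ φ hφ).le) (htdiv_nn φ hφ)
    · filter_upwards [hmem, hτb, ev_sin, ev_g] with φ hφ h1 h2 h3
      have ht1 : τ φ < 1 := hτlt1 φ hφ
      have ht0 : 0 ≤ τ φ := hτ0 φ hφ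
      have hu : 0 < 1 - τ φ := by linarith
      have hsφ := hsinφ φ hφ
      have hcΔ := hcosΔpos φ hφ
      have hψlb := hψτ_lb φ hφ h1
      have hgb2 := hg_ge2 φ hφ
      have hcosΔ1 : Real.cos (θ - φ) ≤ 1 := Real.cos_le_one _
      have h4 : Real.sin θ * (φ / 2) ≤ Real.sin θ * Real.sin φ / Real.cos (θ - φ) := by
        rw [le_div_iff₀ hcΔ]
        nlinarith [mul_le_mul_of_nonneg_left h2 hsinθ.le,
          mul_nonneg (mul_nonneg hsinθ.le (by linarith [hφ.1] : (0:ℝ) ≤ φ / 2))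
            (by linarith : (0:ℝ) ≤ 1 - Real.cos (θ - φ))]
      have h5 : (Real.sin θ * Real.sin φ / Real.cos (θ - φ)) * ψ (max (τ φ - ac) 0)
          ≤ gBEM θ μD φ * (1 - τ φ) ^ 2 := by
        rw [div_le_iff₀ (pow_pos hu 2)] at hgb2
        exact hgb2
      have hc_nn : 0 ≤ Real.sin θ * Real.sin φ / Real.cos (θ - φ) :=
        div_nonneg (mul_nonneg hsinθ.le hsφ.le) hcΔ.le
      have h6 : Real.sin θ * (φ / 2) * (ψ (1 - ac) / 2) ≤ gBEM θ μD φ * (1 - τ φ) ^ 2 :=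
        calc Real.sin θ * (φ / 2) * (ψ (1 - ac) / 2)
            ≤ (Real.sin θ * Real.sin φ / Real.cos (θ - φ)) * (ψ (1 - ac) / 2) :=
              mul_le_mul_of_nonneg_right h4 hε0.le
          _ ≤ (Real.sin θ * Real.sin φ / Real.cos (θ - φ)) * ψ (max (τ φ - ac) 0) :=
              mul_le_mul_of_nonneg_left hψlb.le hc_nn
          _ ≤ _ := h5
      have hnn : 0 ≤ φ * Real.sin φ * (τ φ / (1 - τ φ)) :=
        mul_nonneg (mul_nonneg hφ.1.le hsφ.le) (htdiv_nn φ hφ)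
      have hCφ : 0 ≤ 2 * (μD 0 * Real.tan θ + 1) / (Real.sin θ * (ψ (1 - ac) / 2)) * φ :=
        mul_nonneg hCpos.le hφ.1.le
      rw [Real.le_sqrt hnn hCφ]
      have key1 : Real.sin θ * (ψ (1 - ac) / 2) * φ ^ 4
          ≤ 2 * (μD 0 * Real.tan θ + 1) * (φ * (1 - τ φ) ^ 2) := by
        nlinarith [mul_le_mul_of_nonneg_right h6 (pow_nonneg hφ.1.le 3),
          mul_le_mul_of_nonneg_right h3 (mul_nonneg hφ.1.le (sq_nonneg (1 - τ φ)))]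
      have key2 : φ ^ 4 ≤ 2 * (μD 0 * Real.tan θ + 1) / (Real.sin θ * (ψ (1 - ac) / 2))
          * (φ * (1 - τ φ) ^ 2) := by
        rw [div_mul_eq_mul_div, le_div_iff₀ (mul_pos hsinθ hε0)]
        linarith
      have hb1' : φ * Real.sin φ * τ φ ≤ φ * φ * 1 := by
        nlinarith [(Real.sin_lt hφ.1).le, mul_nonneg hφ.1.le hsφ.le, hφ.1.le]
      have hφ4 : (φ * Real.sin φ * (τ φ / (1 - τ φ))) ^ 2 ≤ φ ^ 4 / (1 - τ φ) ^ 2 := by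
        have hnum : (φ * Real.sin φ * τ φ) ^ 2 ≤ φ ^ 4 := by
          have := pow_le_pow_left₀ (mul_nonneg (mul_nonneg hφ.1.le hsφ.le) ht0) hb1' 2
          nlinarith [this]
        calc (φ * Real.sin φ * (τ φ / (1 - τ φ))) ^ 2
            = (φ * Real.sin φ * τ φ) ^ 2 / (1 - τ φ) ^ 2 := by
              field_simp
          _ ≤ φ ^ 4 / (1 - τ φ) ^ 2 := by gcongr
      have hfin : φ ^ 4 / (1 - τ φ) ^ 2
          ≤ 2 * (μD 0 * Real.tan θ + 1) / (Real.sin θ * (ψ (1 - ac) / 2)) * φ := by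
        rw [div_le_iff₀ (pow_pos hu 2)]
        calc φ ^ 4 ≤ 2 * (μD 0 * Real.tan θ + 1) / (Real.sin θ * (ψ (1 - ac) / 2))
            * (φ * (1 - τ φ) ^ 2) := key2
          _ = 2 * (μD 0 * Real.tan θ + 1) / (Real.sin θ * (ψ (1 - ac) / 2)) * φ
              * (1 - τ φ) ^ 2 := by ring
      linarith
  -- main congruence
  have hcongr : ∀ᶠ φ in F, φ * Real.sin φ * Real.tan (θ - φ)
      + (Real.cos θ / Real.sin θ) * (φ * Real.sin φ * gBEM θ μD φ
        - φ * Real.sin φ * (τ φ / (1 - τ φ)))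
      = φ * muGc θ ψ ac τ φ := by
    filter_upwards [hmem] with φ hφ
    have hE := hEq φ hφ
    have hu : 0 < 1 - τ φ := by linarith [hτlt1 φ hφ]
    have hcΔ := hcosΔpos φ hφ
    have hkey : Real.cos θ * Real.sin φ ^ 2 / Real.cos (θ - φ) * ψ (max (τ φ - ac) 0)
        / (1 - τ φ) ^ 2
        = (Real.cos θ / Real.sin θ) * (Real.sin φ * ((Real.sin θ * Real.sin φ
            / Real.cos (θ - φ)) * ψ (max (τ φ - ac) 0) / (1 - τ φ) ^ 2)) := by
      field_simp
    have hterm : (Real.sin θ * Real.sin φ / Real.cos (θ - φ)) * ψ (max (τ φ - ac) 0)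
        / (1 - τ φ) ^ 2 = gBEM θ μD φ - τ φ / (1 - τ φ) := by linarith
    rw [muGc, hkey, hterm]
    ring
  have hmain : Filter.Tendsto (fun φ : ℝ => φ * muGc θ ψ ac τ φ) F (nhds (μD 0)) := by
    have hlim : Filter.Tendsto (fun φ => φ * Real.sin φ * Real.tan (θ - φ)
        + (Real.cos θ / Real.sin θ) * (φ * Real.sin φ * gBEM θ μD φ
          - φ * Real.sin φ * (τ φ / (1 - τ φ)))) F
        (nhds (0 * 0 * Real.tan θ + (Real.cos θ / Real.sin θ) * (μD 0 * Real.tan θ - 0))) :=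
      ((hid.mul hsin0).mul hT).add (tendsto_const_nhds.mul (hL1.sub hh0))
    have hval : 0 * 0 * Real.tan θ + (Real.cos θ / Real.sin θ) * (μD 0 * Real.tan θ - 0)
        = μD 0 := by
      rw [Real.tan_eq_sin_div_cos]
      field_simp
      ring
    rw [← hval]
    exact hlim.congr' hcongr
  refine ⟨hmain, ?_⟩
  have hinv : Filter.Tendsto (fun φ : ℝ => φ⁻¹) F Filter.atTop := tendsto_inv_nhdsGT_zero
  have hprod := hmain.pos_mul_atTop hμD0 hinv
  refine hprod.congr' ?_
  filter_upwards [self_mem_nhdsWithin] with φ hφ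
  rw [mem_Ioi] at hφ
  rw [mul_comm φ (muGc θ ψ ac τ φ), mul_inv_cancel_right₀ (ne_of_gt hφ)]
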